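/- If d : ℝ^ℓ × ℝ^ℓ → ℝ is a divergence (d ≥ 0 with equality iff the arguments are equal), φ : ℝ^ℓ → ℝ is strictly convex and differentiable, and the pair (φ, d) satisfies information equivalence, then d is the Bregman divergence induced by φ: d(x,y) = φ(x) - φ(y) - ⟨∇φ(y), x - y⟩ for all x, y. -/

import Mathlib

open scoped RealInnerProductSpace BigOperators

theorem stmt_11 {l : ℕ} (φ : EuclideanSpace ℝ (Fin l) → ℝ)
    (φ' : EuclideanSpace ℝ (Fin l) → EuclideanSpace ℝ (Fin l))
    (hconv : StrictConvexOn ℝ Set.univ φ)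
    (hgrad : ∀ x, HasGradientAt φ (φ' x) x)
    (d : EuclideanSpace ℝ (Fin l) → EuclideanSpace ℝ (Fin l) → ℝ)
    (hnonneg : ∀ x y, 0 ≤ d x y)
    (hdef : ∀ x y, d x y = 0 ↔ x = y)
    (heq : ∀ (n : ℕ) (μ : Fin n → ℝ) (x : Fin n → EuclideanSpace ℝ (Fin l)),
      (∀ i, 0 ≤ μ i) → ∑ i, μ i = 1 →
        ∑ i, μ i * φ (x i) - φ (∑ i, μ i • x i) =
          ∑ i, μ i * d (x i) (∑ j, μ j • x j)) :
    ∀ x y, d x y = φ x - φ y - ⟪φ' y, x - y⟫ := by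
  intro x y
  set h : EuclideanSpace ℝ (Fin l) → ℝ :=
    fun v => φ (y + v) - φ y - d (y + v) y with hh
  have h0 : h 0 = 0 := by
    simp [hh, (hdef y y).mpr rfl]
  -- two-point identity
  have key2 : ∀ t : ℝ, 0 ≤ t → t ≤ 1 → ∀ a b : EuclideanSpace ℝ (Fin l),
      t • a + (1 - t) • b = 0 → t * h a + (1 - t) * h b = 0 := by
    intro t ht ht1 a b hab
    have hsum : (∑ i, (![t, 1 - t] : Fin 2 → ℝ) i • (![y + a, y + b] : Fin 2 → EuclideanSpace ℝ (Fin l)) i) = y := by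
      simp only [Fin.sum_univ_two, Matrix.cons_val_zero, Matrix.cons_val_one, Matrix.head_cons]
      rw [show t • (y + a) + ((1:ℝ) - t) • (y + b)
            = y + (t • a + (1 - t) • b) by module, hab]
      simp
    have hE := heq 2 ![t, 1 - t] ![y + a, y + b]
      (by intro i; fin_cases i <;> simp [ht, ht1] <;> linarith)
      (by simp [Fin.sum_univ_two])
    rw [hsum] at hE
    simp only [Fin.sum_univ_two, Matrix.cons_val_zero, Matrix.cons_val_one, Matrix.head_cons] at hE
    simp only [hh]
    linear_combination hE
  -- three-point identity
  have key3 : ∀ a b c : EuclideanSpace ℝ (Fin l),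
      a + b + c = 0 → h a + h b + h c = 0 := by
    intro a b c habc
    have hsum : (∑ i, (![(1:ℝ)/3, 1/3, 1/3] : Fin 3 → ℝ) i •
        (![y + a, y + b, y + c] : Fin 3 → EuclideanSpace ℝ (Fin l)) i) = y := by
      simp only [Fin.sum_univ_three, Matrix.cons_val_zero, Matrix.cons_val_one,
        Matrix.head_cons, Matrix.cons_val_two, Matrix.tail_cons]
      rw [show ((1:ℝ)/3) • (y + a) + ((1:ℝ)/3) • (y + b) + ((1:ℝ)/3) • (y + c)
          = y + ((1:ℝ)/3) • (a + b + c) by module, habc]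
      simp
    have hE := heq 3 ![(1:ℝ)/3, 1/3, 1/3] ![y + a, y + b, y + c]
      (by intro i; fin_cases i <;> norm_num)
      (by simp [Fin.sum_univ_three]; norm_num)
    rw [hsum] at hE
    simp only [Fin.sum_univ_three, Matrix.cons_val_zero, Matrix.cons_val_one,
      Matrix.head_cons, Matrix.cons_val_two, Matrix.tail_cons] at hE
    simp only [hh]
    linear_combination 3 * hE
  -- oddness
  have hodd : ∀ v : EuclideanSpace ℝ (Fin l), h (-v) = -h v := by
    intro v
    have := key2 (1/2) (by norm_num) (by norm_num) v (-v) (by module)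
    linear_combination 2 * this
  -- additivity
  have hadd : ∀ a b : EuclideanSpace ℝ (Fin l), h (a + b) = h a + h b := by
    intro a b
    have := key3 a b (-(a + b)) (by module)
    rw [hodd] at this
    linarith
  -- homogeneity
  have hsmul : ∀ (c : ℝ) (u : EuclideanSpace ℝ (Fin l)), h (c • u) = c * h u := by
    have hpos : ∀ (c : ℝ), 0 ≤ c → ∀ u, h (c • u) = c * h u := by
      intro c hc u
      have h1c : (0:ℝ) < 1 + c := by linarith
      have := key2 (1/(1+c)) (by positivity) (by
          rw [div_le_one h1c]; linarith) (c • u) (-u) (by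
          rw [show (1:ℝ) - 1/(1+c) = c/(1+c) by field_simp; ring]
          rw [smul_smul, smul_neg]
          rw [show (1/(1+c)) * c = c/(1+c) by ring]
          simp)
      rw [hodd] at this
      have h2 : (1/(1+c)) * h (c • u) = (1 - 1/(1+c)) * h u := by linarith
      rw [show (1:ℝ) - 1/(1+c) = c/(1+c) by field_simp; ring] at h2
      field_simp at h2
      linarith
    intro c u
    rcases le_or_gt 0 c with hc | hc
    · exact hpos c hc u
    · have : h (c • u) = h (-((-c) • u)) := by rw [neg_smul, neg_neg]
      rw [this, hodd, hpos (-c) (by linarith) u]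
      ring
  -- h is a continuous linear map
  have hlin : IsLinearMap ℝ h := ⟨hadd, fun c u => hsmul c u⟩
  set L : EuclideanSpace ℝ (Fin l) →L[ℝ] ℝ :=
    LinearMap.toContinuousLinearMap (IsLinearMap.mk' h hlin) with hL
  have hLapp : ∀ v, L v = h v := fun v => rfl
  -- local min argument
  set F : EuclideanSpace ℝ (Fin l) → ℝ := fun z => φ z - φ y - L (z - y) with hF
  have hFd : ∀ z, F z = d z y := by
    intro z
    have : h (z - y) = φ z - φ y - d z y := by
      simp only [hh, add_sub_cancel]
    simp only [hF, hLapp, this]; ring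
  have hmin : IsLocalMin F y := by
    apply Filter.Eventually.of_forall
    intro z
    rw [hFd z, hFd y, (hdef y y).mpr rfl]
    exact hnonneg z y
  have hDF : HasFDerivAt F ((InnerProductSpace.toDual ℝ (EuclideanSpace ℝ (Fin l)) (φ' y)) - L) y := by
    have h1 : HasFDerivAt φ ((InnerProductSpace.toDual ℝ (EuclideanSpace ℝ (Fin l))) (φ' y)) y :=
      (hgrad y).hasFDerivAt
    have h2 : HasFDerivAt (fun z => φ y + L (z - y)) L y := by
      have : HasFDerivAt (fun z : EuclideanSpace ℝ (Fin l) => φ y + (L z - L y)) L y :=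
        ((L.hasFDerivAt.sub_const (L y)).const_add (φ y))
      convert this using 2 with z
      rw [map_sub]
    have := h1.sub h2
    have hfun : F = φ - fun z => φ y + L (z - y) := by
      funext z
      simp only [hF, Pi.sub_apply]; ring
    rw [hfun]; exact this
  have hD0 := hmin.hasFDerivAt_eq_zero hDF
  have hEval : ⟪φ' y, x - y⟫ - h (x - y) = 0 := by
    have := congrFun (congrArg (fun (f : EuclideanSpace ℝ (Fin l) →L[ℝ] ℝ) => (f : EuclideanSpace ℝ (Fin l) → ℝ)) hD0) (x - y)
    simpa [InnerProductSpace.toDual_apply_apply, hLapp] using this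
  have hx : h (x - y) = φ x - φ y - d x y := by
    simp only [hh, add_sub_cancel]
  linarith [hEval, hx]
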